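/- Nonlinear Gronwall (Bihari-type) lemma: let t₀ ∈ ℝ, h > 0, q > 1 and c > 0. Let a, b : [t₀, t₀+h] → [0,∞) be integrable, and let f : [t₀, t₀+h] → [0,∞) be continuous and satisfy f(t) ≤ c + ∫_{t₀}^{t} (a(s) f(s) + b(s) f(s)^q) ds for all t ∈ [t₀, t₀+h]. Assume the smallness condition c^{q−1} · (q−1) · ∫_{t₀}^{t₀+h} b(s) ds < exp((1−q) ∫_{t₀}^{t₀+h} a(s) ds). Then for every t ∈ [t₀, t₀+h], f(t) ≤ [ c^{1−q} · exp((1−q) ∫_{t₀}^{t} a(s) ds) − (q−1) ∫_{t₀}^{t} b(s) · exp((1−q) ∫_{s}^{t} a(r) dr) ds ]^{−1/(q−1)}, the quantity in brackets being strictly positive for all such t. -/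

import Mathlib

open MeasureTheory Real Set intervalIntegral

noncomputable section

lemma abs_primitive_le {φ : ℝ → ℝ} (hφ : Integrable φ) (x₀ t : ℝ) :
    |∫ s in x₀..t, φ s| ≤ ∫ x, |φ x| := by
  have key : ∀ u v : ℝ, u ≤ v → |∫ s in u..v, φ s| ≤ ∫ x, |φ x| := by
    intro u v huv
    refine (intervalIntegral.abs_integral_le_integral_abs huv).trans ?_
    rw [intervalIntegral.integral_of_le huv]
    exact setIntegral_le_integral hφ.abs (Filter.Eventually.of_forall fun x => abs_nonneg _)
  rcases le_total x₀ t with h | h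
  · exact key _ _ h
  · rw [intervalIntegral.integral_symm, abs_neg]
    exact key _ _ h

lemma bddcont_mul_integrable {g φ : ℝ → ℝ} (hφ : Integrable φ) (hg : Continuous g)
    {C : ℝ} (hC : ∀ x, |g x| ≤ C) : Integrable (fun x => g x * φ x) :=
  hφ.bdd_mul hg.aestronglyMeasurable (c := C)
    (Filter.Eventually.of_forall fun x => by simpa [Real.norm_eq_abs] using hC x)

lemma contOn_mul_integrableOn {g φ : ℝ → ℝ} (hφ : Integrable φ) {α β : ℝ}
    (hg : ContinuousOn g (Icc α β)) :
    IntegrableOn (fun x => g x * φ x) (Icc α β) := by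
  obtain ⟨C, hC⟩ := IsCompact.exists_bound_of_continuousOn isCompact_Icc hg
  refine Integrable.bdd_mul (c := C) (hφ.restrict)
    (hg.aestronglyMeasurable measurableSet_Icc) ?_
  rw [ae_restrict_iff' measurableSet_Icc]
  exact Filter.Eventually.of_forall fun x hx => hC x hx

/-- Chain rule in integral form for integrable densities, by L¹-approximation. -/
lemma integral_chain_rule (x₀ T F₀ m M r : ℝ) (hr : 0 < r) (φ : ℝ → ℝ) (hφ : Integrable φ)
    (hF : ∀ s ∈ Icc x₀ T, F₀ + ∫ u in x₀..s, φ u ∈ Icc m M)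
    (ψ ψ' : ℝ → ℝ)
    (hψ : ∀ x ∈ Icc (m - r) (M + r), HasDerivAt ψ (ψ' x) x)
    (hψ'c : ContinuousOn ψ' (Icc (m - r) (M + r)))
    {t : ℝ} (ht : t ∈ Icc x₀ T) :
    ψ (F₀ + ∫ s in x₀..t, φ s) = ψ F₀ + ∫ s in x₀..t, ψ' (F₀ + ∫ u in x₀..s, φ u) * φ s := by
  set F : ℝ → ℝ := fun s => F₀ + ∫ u in x₀..s, φ u with hFdef
  have hx₀T : x₀ ≤ T := le_trans ht.1 ht.2
  have hFx₀ : F x₀ = F₀ := by simp [hFdef]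
  have hFc : Continuous F := continuous_const.add (hφ.continuous_primitive x₀)
  have hFK : ∀ s ∈ Icc x₀ T, F s ∈ Icc (m - r) (M + r) := by
    intro s hs
    obtain ⟨h1, h2⟩ := hF s hs
    have hFs : F s = F₀ + ∫ u in x₀..s, φ u := rfl
    exact ⟨by rw [hFs]; linarith, by rw [hFs]; linarith⟩
  obtain ⟨C₀, hC₀⟩ := IsCompact.exists_bound_of_continuousOn isCompact_Icc hψ'c
  set Mψ : ℝ := max C₀ 0 with hMψdef
  have hMψ0 : 0 ≤ Mψ := le_max_right _ _
  have hMψ : ∀ x ∈ Icc (m - r) (M + r), |ψ' x| ≤ Mψ := fun x hx =>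
    le_trans (by simpa [Real.norm_eq_abs] using hC₀ x hx) (le_max_left _ _)
  have hψ'F : ContinuousOn (fun s => ψ' (F s)) (Icc x₀ T) :=
    hψ'c.comp hFc.continuousOn hFK
  have hUC := isCompact_Icc.uniformContinuousOn_of_continuous hψ'c
  rw [Metric.uniformContinuousOn_iff] at hUC
  have hsub : Icc x₀ t ⊆ Icc x₀ T := Icc_subset_Icc le_rfl ht.2
  have huIcc : uIcc x₀ t = Icc x₀ t := uIcc_of_le ht.1
  have hX2 : IntervalIntegrable (fun s => ψ' (F s) * φ s) volume x₀ t := by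
    apply IntegrableOn.intervalIntegrable
    rw [huIcc]
    exact contOn_mul_integrableOn hφ (hψ'F.mono hsub)
  set N : ℝ := ∫ x, |φ x| with hNdef
  have hN0 : 0 ≤ N := integral_nonneg fun x => abs_nonneg _
  apply eq_of_forall_dist_le
  intro δ hδ
  set L : ℝ := N + 1 with hLdef
  have hL0 : 0 < L := by linarith
  obtain ⟨ε', hε'0, hui⟩ := hUC (δ / (3 * L)) (by positivity)
  set ε : ℝ := min (min r (ε' / 2)) (δ / (3 * (Mψ + 1))) with hεdef
  have hε0 : 0 < ε := lt_min (lt_min hr (by positivity)) (by positivity)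
  obtain ⟨g, gsupp, hgapp, gcont, gint⟩ := hφ.exists_hasCompactSupport_integral_sub_le hε0
  set G : ℝ → ℝ := fun s => F₀ + ∫ u in x₀..s, g u with hGdef
  have hGx₀ : G x₀ = F₀ := by simp [hGdef]
  have hGc : Continuous G := continuous_const.add (gint.continuous_primitive x₀)
  have hφg : ∫ x, |φ x - g x| ≤ ε := by simpa [Real.norm_eq_abs] using hgapp
  have hclose : ∀ s : ℝ, |F s - G s| ≤ ε := by
    intro s
    have heq : F s - G s = ∫ u in x₀..s, (φ u - g u) := by
      rw [intervalIntegral.integral_sub hφ.intervalIntegrable gint.intervalIntegrable]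
      simp only [hFdef, hGdef]
      ring
    rw [heq]
    exact (abs_primitive_le (hφ.sub gint) x₀ s).trans hφg
  have hεr : ε ≤ r := le_trans (min_le_left _ _) (min_le_left _ _)
  have hεε' : ε < ε' := lt_of_le_of_lt (le_trans (min_le_left _ _) (min_le_right _ _))
    (by linarith)
  have hεδ : ε ≤ δ / (3 * (Mψ + 1)) := min_le_right _ _
  have hGK : ∀ s ∈ Icc x₀ T, G s ∈ Icc (m - r) (M + r) := by
    intro s hs
    obtain ⟨h1, h2⟩ := hF s hs
    obtain ⟨h3, h4⟩ := abs_le.mp (hclose s)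
    have hFs : F s = F₀ + ∫ u in x₀..s, φ u := rfl
    rw [hFs] at h3 h4
    exact ⟨by linarith, by linarith⟩
  have hGderiv : ∀ s ∈ uIcc x₀ t, HasDerivAt (fun u => ψ (G u)) (ψ' (G s) * g s) s := by
    intro s hs
    have hsmem : s ∈ Icc x₀ T := hsub (huIcc ▸ hs)
    have h1 : HasDerivAt (fun u => ∫ x in x₀..u, g x) (g s) s :=
      intervalIntegral.integral_hasDerivAt_right gint.intervalIntegrable
        (gcont.stronglyMeasurableAtFilter _ _) gcont.continuousAt
    have h2 : HasDerivAt G (g s) s := h1.const_add F₀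
    have h3 := (hψ (G s) (hGK s hsmem)).comp s h2
    exact h3
  have hX1 : IntervalIntegrable (fun s => ψ' (G s) * g s) volume x₀ t := by
    apply ContinuousOn.intervalIntegrable
    rw [huIcc]
    exact (hψ'c.comp hGc.continuousOn fun s hs => hGK s (hsub hs)).mul gcont.continuousOn
  have hFTC := intervalIntegral.integral_eq_sub_of_hasDerivAt hGderiv hX1
  have hψGt : ψ (G t) = ψ F₀ + ∫ s in x₀..t, ψ' (G s) * g s := by
    rw [hFTC, hGx₀]; ring
  -- Lipschitz estimate for ψ on the big interval
  have hd1 : |ψ (F t) - ψ (G t)| ≤ Mψ * ε := by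
    have hlip := Convex.norm_image_sub_le_of_norm_hasDerivWithin_le
      (f := ψ) (f' := ψ') (s := Icc (m - r) (M + r))
      (fun x hx => (hψ x hx).hasDerivWithinAt)
      (fun x hx => by simpa [Real.norm_eq_abs] using hMψ x hx)
      (convex_Icc _ _) (hGK t ht) (hFK t ht)
    refine le_trans (by simpa [Real.norm_eq_abs] using hlip) ?_
    exact mul_le_mul_of_nonneg_left (by simpa [Real.norm_eq_abs, abs_sub_comm] using hclose t)
      hMψ0
  -- integral difference estimate
  have hptwise : ∀ s ∈ Icc x₀ t,
      |ψ' (G s) * g s - ψ' (F s) * φ s| ≤ Mψ * |g s - φ s| + (δ / (3 * L)) * |φ s| := by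
    intro s hs
    have hsmem : s ∈ Icc x₀ T := hsub hs
    have hGs := hGK s hsmem
    have hFs := hFK s hsmem
    have hdist : dist (ψ' (G s)) (ψ' (F s)) < δ / (3 * L) := by
      apply hui _ hGs _ hFs
      rw [Real.dist_eq, abs_sub_comm]
      exact lt_of_le_of_lt (hclose s) hεε'
    rw [Real.dist_eq] at hdist
    have key : ψ' (G s) * g s - ψ' (F s) * φ s
        = ψ' (G s) * (g s - φ s) + (ψ' (G s) - ψ' (F s)) * φ s := by ring
    rw [key]
    refine (abs_add_le _ _).trans ?_
    rw [abs_mul, abs_mul]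
    exact add_le_add (mul_le_mul_of_nonneg_right (hMψ _ hGs) (abs_nonneg _))
      (mul_le_mul_of_nonneg_right hdist.le (abs_nonneg _))
  have hgφint : Integrable (fun s => |g s - φ s|) := (gint.sub hφ).abs
  have hbnd_int : IntervalIntegrable (fun s => Mψ * |g s - φ s| + (δ / (3 * L)) * |φ s|)
      volume x₀ t := ((hgφint.const_mul Mψ).add (hφ.abs.const_mul _)).intervalIntegrable
  have hint1 : ∫ s in x₀..t, |g s - φ s| ≤ ε := by
    rw [intervalIntegral.integral_of_le ht.1]
    refine le_trans (setIntegral_le_integral hgφint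
      (Filter.Eventually.of_forall fun x => abs_nonneg _)) ?_
    calc ∫ s, |g s - φ s| = ∫ s, |φ s - g s| := by
          congr 1; funext s; rw [abs_sub_comm]
      _ ≤ ε := hφg
  have hint2 : ∫ s in x₀..t, |φ s| ≤ N := by
    rw [intervalIntegral.integral_of_le ht.1]
    exact setIntegral_le_integral hφ.abs (Filter.Eventually.of_forall fun x => abs_nonneg _)
  have hd2 : |(∫ s in x₀..t, ψ' (G s) * g s) - ∫ s in x₀..t, ψ' (F s) * φ s|
      ≤ Mψ * ε + (δ / (3 * L)) * N := by
    rw [← intervalIntegral.integral_sub hX1 hX2]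
    refine le_trans (intervalIntegral.abs_integral_le_integral_abs ht.1) ?_
    refine le_trans (intervalIntegral.integral_mono_on ht.1 (hX1.sub hX2).abs hbnd_int hptwise) ?_
    rw [intervalIntegral.integral_add
        ((hgφint.const_mul Mψ).intervalIntegrable) ((hφ.abs.const_mul _).intervalIntegrable),
      intervalIntegral.integral_const_mul, intervalIntegral.integral_const_mul]
    exact add_le_add (mul_le_mul_of_nonneg_left hint1 hMψ0)
      (mul_le_mul_of_nonneg_left hint2 (by positivity))
  -- combine
  have hMε : Mψ * ε ≤ δ / 3 := by
    refine le_trans (mul_le_mul_of_nonneg_left hεδ hMψ0) ?_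
    rw [mul_div_assoc']
    rw [div_le_div_iff₀ (by positivity) (by norm_num)]
    nlinarith
  have hδL : (δ / (3 * L)) * N ≤ δ / 3 := by
    have h1 : (δ / (3 * L)) * N ≤ (δ / (3 * L)) * L :=
      mul_le_mul_of_nonneg_left (by linarith) (by positivity)
    have h2 : (δ / (3 * L)) * L = δ / 3 := by field_simp
    linarith
  calc dist (ψ (F t)) (ψ F₀ + ∫ s in x₀..t, ψ' (F s) * φ s)
      ≤ dist (ψ (F t)) (ψ (G t)) + dist (ψ (G t)) (ψ F₀ + ∫ s in x₀..t, ψ' (F s) * φ s) :=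
        dist_triangle _ _ _
    _ ≤ Mψ * ε + (Mψ * ε + (δ / (3 * L)) * N) := by
        refine add_le_add ?_ ?_
        · rw [Real.dist_eq]; exact hd1
        · rw [hψGt, Real.dist_eq]
          simpa [add_sub_add_left_eq_sub] using hd2
    _ ≤ δ / 3 + (δ / 3 + δ / 3) := by linarith
    _ ≤ δ := by linarith

/-- Square rule in integral form. -/
lemma integral_square_rule (x₀ T H₀ : ℝ) (φ : ℝ → ℝ) (hφ : Integrable φ)
    {t : ℝ} (ht : t ∈ Icc x₀ T) :
    (H₀ + ∫ s in x₀..t, φ s) ^ 2 = H₀ ^ 2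
      + ∫ s in x₀..t, 2 * (H₀ + ∫ u in x₀..s, φ u) * φ s := by
  have hR : 0 ≤ ∫ x, |φ x| := integral_nonneg fun x => abs_nonneg _
  refine integral_chain_rule x₀ T H₀ (-(|H₀| + ∫ x, |φ x|)) (|H₀| + ∫ x, |φ x|) 1 one_pos φ hφ
    ?_ (fun x => x ^ 2) (fun x => 2 * x) ?_ ?_ ht
  · intro s hs
    have h1 := abs_le.mp (abs_primitive_le hφ x₀ s)
    have h2 := neg_abs_le H₀
    have h3 := le_abs_self H₀
    exact ⟨by linarith [h1.1], by linarith [h1.2]⟩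
  · intro x _
    simpa using hasDerivAt_pow 2 x
  · exact (continuous_const.mul continuous_id).continuousOn

/-- Product rule in integral form. -/
lemma integral_product_rule (x₀ T F₀ G₀ : ℝ) (φ γ : ℝ → ℝ) (hφ : Integrable φ)
    (hγ : Integrable γ) {t : ℝ} (ht : t ∈ Icc x₀ T) :
    (F₀ + ∫ s in x₀..t, φ s) * (G₀ + ∫ s in x₀..t, γ s)
      = F₀ * G₀ + ∫ s in x₀..t,
          (φ s * (G₀ + ∫ u in x₀..s, γ u) + (F₀ + ∫ u in x₀..s, φ u) * γ s) := by
  have h1 := integral_square_rule x₀ T F₀ φ hφ ht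
  have h2 := integral_square_rule x₀ T G₀ γ hγ ht
  have h3 := integral_square_rule x₀ T (F₀ + G₀) (fun s => φ s + γ s) (hφ.add hγ) ht
  have hPb : ∀ s : ℝ, |F₀ + ∫ u in x₀..s, φ u| ≤ |F₀| + ∫ x, |φ x| := fun s =>
    (abs_add_le _ _).trans (by linarith [abs_primitive_le hφ x₀ s])
  have hQb : ∀ s : ℝ, |G₀ + ∫ u in x₀..s, γ u| ≤ |G₀| + ∫ x, |γ x| := fun s =>
    (abs_add_le _ _).trans (by linarith [abs_primitive_le hγ x₀ s])
  have hPc : Continuous fun s : ℝ => F₀ + ∫ u in x₀..s, φ u :=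
    continuous_const.add (hφ.continuous_primitive x₀)
  have hQc : Continuous fun s : ℝ => G₀ + ∫ u in x₀..s, γ u :=
    continuous_const.add (hγ.continuous_primitive x₀)
  have hiPφ : Integrable (fun s => 2 * (F₀ + ∫ u in x₀..s, φ u) * φ s) := by
    refine bddcont_mul_integrable hφ (continuous_const.mul hPc)
      (C := 2 * (|F₀| + ∫ x, |φ x|)) fun s => ?_
    rw [abs_mul, abs_two]
    nlinarith [hPb s, abs_nonneg (F₀ + ∫ u in x₀..s, φ u)]
  have hiQγ : Integrable (fun s => 2 * (G₀ + ∫ u in x₀..s, γ u) * γ s) := by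
    refine bddcont_mul_integrable hγ (continuous_const.mul hQc)
      (C := 2 * (|G₀| + ∫ x, |γ x|)) fun s => ?_
    rw [abs_mul, abs_two]
    nlinarith [hQb s, abs_nonneg (G₀ + ∫ u in x₀..s, γ u)]
  have hiφQ : Integrable (fun s => φ s * (G₀ + ∫ u in x₀..s, γ u)) :=
    (bddcont_mul_integrable hφ hQc hQb).congr
      (Filter.Eventually.of_forall fun s => mul_comm _ _)
  have hiPγ : Integrable (fun s => (F₀ + ∫ u in x₀..s, φ u) * γ s) :=
    bddcont_mul_integrable hγ hPc hPb
  have hiS : Integrable (fun s => 2 * (φ s * (G₀ + ∫ u in x₀..s, γ u)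
      + (F₀ + ∫ u in x₀..s, φ u) * γ s)) := (hiφQ.add hiPγ).const_mul 2
  have hiBC : Integrable (fun s => 2 * (G₀ + ∫ u in x₀..s, γ u) * γ s
      + 2 * (φ s * (G₀ + ∫ u in x₀..s, γ u)
        + (F₀ + ∫ u in x₀..s, φ u) * γ s)) := hiQγ.add hiS
  have hPQ : ∀ s : ℝ, (F₀ + G₀) + ∫ u in x₀..s, (φ u + γ u)
      = (F₀ + ∫ u in x₀..s, φ u) + (G₀ + ∫ u in x₀..s, γ u) := by
    intro s
    rw [intervalIntegral.integral_add hφ.intervalIntegrable hγ.intervalIntegrable]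
    ring
  have hsum : (∫ s in x₀..t, 2 * ((F₀ + G₀) + ∫ u in x₀..s, (φ u + γ u)) * (φ s + γ s))
      = (∫ s in x₀..t, 2 * (F₀ + ∫ u in x₀..s, φ u) * φ s)
        + ((∫ s in x₀..t, 2 * (G₀ + ∫ u in x₀..s, γ u) * γ s)
          + ∫ s in x₀..t, 2 * (φ s * (G₀ + ∫ u in x₀..s, γ u)
              + (F₀ + ∫ u in x₀..s, φ u) * γ s)) := by
    calc (∫ s in x₀..t, 2 * ((F₀ + G₀) + ∫ u in x₀..s, (φ u + γ u)) * (φ s + γ s))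
        = ∫ s in x₀..t, (2 * (F₀ + ∫ u in x₀..s, φ u) * φ s
            + (2 * (G₀ + ∫ u in x₀..s, γ u) * γ s
              + 2 * (φ s * (G₀ + ∫ u in x₀..s, γ u)
                + (F₀ + ∫ u in x₀..s, φ u) * γ s))) := by
          apply intervalIntegral.integral_congr
          intro s _
          beta_reduce
          rw [hPQ s]
          ring
      _ = (∫ s in x₀..t, 2 * (F₀ + ∫ u in x₀..s, φ u) * φ s)
            + ∫ s in x₀..t, (2 * (G₀ + ∫ u in x₀..s, γ u) * γ s
              + 2 * (φ s * (G₀ + ∫ u in x₀..s, γ u)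
                + (F₀ + ∫ u in x₀..s, φ u) * γ s)) :=
          intervalIntegral.integral_add hiPφ.intervalIntegrable hiBC.intervalIntegrable
      _ = _ := congrArg (fun z => (∫ s in x₀..t, 2 * (F₀ + ∫ u in x₀..s, φ u) * φ s) + z)
          (intervalIntegral.integral_add hiQγ.intervalIntegrable hiS.intervalIntegrable)
  beta_reduce at h3
  rw [hPQ t, hsum] at h3
  have h2const : (∫ s in x₀..t, 2 * (φ s * (G₀ + ∫ u in x₀..s, γ u)
        + (F₀ + ∫ u in x₀..s, φ u) * γ s))
      = 2 * ∫ s in x₀..t, (φ s * (G₀ + ∫ u in x₀..s, γ u)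
        + (F₀ + ∫ u in x₀..s, φ u) * γ s) := intervalIntegral.integral_const_mul 2 _
  rw [h2const] at h3
  linear_combination (h3 - h1 - h2) / 2

/-- rpow/exp algebra helper. -/
lemma exp_rpow_helper {q X : ℝ} (hq : 1 < q) (hX : 0 < X) (y : ℝ) :
    Real.exp y * (Real.exp ((q - 1) * y) * X ^ (-(1/(q-1)) - 1))
      = (Real.exp y * X ^ (-(1/(q-1)))) ^ q := by
  have hq0 : q - 1 ≠ 0 := ne_of_gt (by linarith)
  have h1 : (Real.exp y * X ^ (-(1/(q-1)))) ^ q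
      = Real.exp (y * q) * X ^ ((-(1/(q-1))) * q) := by
    rw [Real.mul_rpow (Real.exp_pos y).le (Real.rpow_nonneg hX.le _), ← Real.exp_mul,
      ← Real.rpow_mul hX.le]
  rw [h1, ← mul_assoc, ← Real.exp_add]
  congr 1
  · ring
  · congr 1
    field_simp
    ring

set_option maxHeartbeats 2000000 in
theorem nonlinear_gronwall (t₀ h q c : ℝ) (hh : 0 < h) (hq : 1 < q) (hc : 0 < c)
    (a b f : ℝ → ℝ)
    (ha_nonneg : ∀ t ∈ Set.Icc t₀ (t₀ + h), 0 ≤ a t)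
    (hb_nonneg : ∀ t ∈ Set.Icc t₀ (t₀ + h), 0 ≤ b t)
    (ha_int : IntegrableOn a (Set.Icc t₀ (t₀ + h)))
    (hb_int : IntegrableOn b (Set.Icc t₀ (t₀ + h)))
    (hf_cont : ContinuousOn f (Set.Icc t₀ (t₀ + h)))
    (hf_nonneg : ∀ t ∈ Set.Icc t₀ (t₀ + h), 0 ≤ f t)
    (hineq : ∀ t ∈ Set.Icc t₀ (t₀ + h),
      f t ≤ c + ∫ s in t₀..t, (a s * f s + b s * f s ^ q))
    (hsmall : c ^ (q - 1) * (q - 1) * (∫ s in t₀..(t₀ + h), b s)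
      < Real.exp ((1 - q) * ∫ s in t₀..(t₀ + h), a s)) :
    ∀ t ∈ Set.Icc t₀ (t₀ + h),
      0 < c ^ (1 - q) * Real.exp ((1 - q) * ∫ s in t₀..t, a s)
          - (q - 1) * ∫ s in t₀..t, b s * Real.exp ((1 - q) * ∫ r in s..t, a r) ∧
      f t ≤ (c ^ (1 - q) * Real.exp ((1 - q) * ∫ s in t₀..t, a s)
          - (q - 1) * ∫ s in t₀..t, b s * Real.exp ((1 - q) * ∫ r in s..t, a r))
            ^ (-(1 / (q - 1))) := by
  have hT : t₀ ≤ t₀ + h := by linarith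
  have hp : (0:ℝ) < q - 1 := by linarith
  have hq0 : q - 1 ≠ 0 := ne_of_gt hp
  set I : Set ℝ := Set.Icc t₀ (t₀ + h) with hIdef
  set ta : ℝ → ℝ := I.indicator a with hta_def
  set tb : ℝ → ℝ := I.indicator b with htb_def
  have hta_int : Integrable ta := (integrable_indicator_iff measurableSet_Icc).mpr ha_int
  have htb_int : Integrable tb := (integrable_indicator_iff measurableSet_Icc).mpr hb_int
  have hta_nonneg : ∀ s, 0 ≤ ta s := by
    intro s
    rw [hta_def]
    by_cases hs : s ∈ I
    · rw [Set.indicator_of_mem hs]; exact ha_nonneg s hs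
    · rw [Set.indicator_of_notMem hs]
  have htb_nonneg : ∀ s, 0 ≤ tb s := by
    intro s
    rw [htb_def]
    by_cases hs : s ∈ I
    · rw [Set.indicator_of_mem hs]; exact hb_nonneg s hs
    · rw [Set.indicator_of_notMem hs]
  have hta_eq : ∀ s ∈ I, a s = ta s := fun s hs => (Set.indicator_of_mem hs a).symm
  have htb_eq : ∀ s ∈ I, b s = tb s := fun s hs => (Set.indicator_of_mem hs b).symm
  have htb_zero : ∀ s, s ∉ I → tb s = 0 := fun s hs => Set.indicator_of_notMem hs b
  -- the primitive of ta
  have hAc : Continuous fun τ : ℝ => ∫ u in t₀..τ, ta u := hta_int.continuous_primitive t₀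
  have hAbd : ∀ τ : ℝ, |∫ u in t₀..τ, ta u| ≤ ∫ x, |ta x| := abs_primitive_le hta_int t₀
  have hAmono : ∀ u v : ℝ, u ≤ v → (∫ s in t₀..u, ta s) ≤ ∫ s in t₀..v, ta s := by
    intro u v huv
    have hadd := intervalIntegral.integral_add_adjacent_intervals
      (hta_int.intervalIntegrable (a := t₀) (b := u))
      (hta_int.intervalIntegrable (a := u) (b := v))
    have hnn : 0 ≤ ∫ s in u..v, ta s :=
      intervalIntegral.integral_nonneg huv fun s _ => hta_nonneg s
    linarith
  -- density for the exponential factor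
  set phiE : ℝ → ℝ := fun s => Real.exp (∫ u in t₀..s, ta u) * ta s with hphiE_def
  have hphiE_int : Integrable phiE := by
    rw [hphiE_def]
    refine bddcont_mul_integrable hta_int (Real.continuous_exp.comp hAc)
      (C := Real.exp (∫ x, |ta x|)) (fun s => ?_)
    have h1 : |Real.exp (∫ u in t₀..s, ta u)| = Real.exp (∫ u in t₀..s, ta u) :=
      abs_of_pos (Real.exp_pos _)
    rw [h1]
    exact Real.exp_le_exp.mpr (abs_le.mp (hAbd s)).2
  have hE : ∀ t' ∈ I, Real.exp (∫ u in t₀..t', ta u) = 1 + ∫ s in t₀..t', phiE s := by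
    intro t' ht'
    have hch := integral_chain_rule t₀ (t₀ + h) 0 (-(∫ x, |ta x|)) (∫ x, |ta x|) 1 one_pos
      ta hta_int (fun s _ => ⟨by linarith [(abs_le.mp (hAbd s)).1],
        by linarith [(abs_le.mp (hAbd s)).2]⟩)
      Real.exp Real.exp (fun x _ => Real.hasDerivAt_exp x)
      Real.continuous_exp.continuousOn ht'
    rw [hphiE_def]
    simpa using hch
  -- the density gam (for the decreasing bracket term)
  set gam : ℝ → ℝ := fun s => (-(q - 1) * Real.exp ((q - 1) * ∫ u in t₀..s, ta u)) * tb s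
    with hgam_def
  have hgam_int : Integrable gam := by
    rw [hgam_def]
    refine bddcont_mul_integrable htb_int
      (continuous_const.mul (Real.continuous_exp.comp (continuous_const.mul hAc)))
      (C := (q - 1) * Real.exp ((q - 1) * ∫ x, |ta x|)) (fun s => ?_)
    have h1 : |(-(q - 1) * Real.exp ((q - 1) * ∫ u in t₀..s, ta u))|
        = (q - 1) * Real.exp ((q - 1) * ∫ u in t₀..s, ta u) := by
      rw [abs_mul, abs_neg, abs_of_pos hp, abs_of_pos (Real.exp_pos _)]
    rw [h1]
    exact mul_le_mul_of_nonneg_left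
      (Real.exp_le_exp.mpr (mul_le_mul_of_nonneg_left (abs_le.mp (hAbd s)).2 hp.le)) hp.le
  have hgam_nonpos : ∀ s, gam s ≤ 0 := by
    intro s
    rw [hgam_def]
    have h1 : (-(q - 1) * Real.exp ((q - 1) * ∫ u in t₀..s, ta u)) ≤ 0 := by
      nlinarith [Real.exp_pos ((q - 1) * ∫ u in t₀..s, ta u)]
    have := mul_le_mul_of_nonneg_right h1 (htb_nonneg s)
    simpa using this
  have hRmono : ∀ u v : ℝ, u ≤ v → (∫ s in t₀..v, gam s) ≤ ∫ s in t₀..u, gam s := by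
    intro u v huv
    have hadd := intervalIntegral.integral_add_adjacent_intervals
      (hgam_int.intervalIntegrable (a := t₀) (b := u))
      (hgam_int.intervalIntegrable (a := u) (b := v))
    have hnn : 0 ≤ ∫ s in u..v, -gam s :=
      intervalIntegral.integral_nonneg huv fun s _ => neg_nonneg.mpr (hgam_nonpos s)
    rw [intervalIntegral.integral_neg] at hnn
    linarith
  have hR0 : (∫ s in t₀..t₀, gam s) = 0 := intervalIntegral.integral_same
  have hRT_nonpos : (∫ s in t₀..(t₀ + h), gam s) ≤ 0 := by
    have := hRmono t₀ (t₀ + h) hT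
    linarith [hR0]
  have hRconst : ∀ s : ℝ, t₀ + h ≤ s →
      (∫ r in t₀..s, gam r) = ∫ r in t₀..(t₀ + h), gam r := by
    intro s hs
    have hadd := intervalIntegral.integral_add_adjacent_intervals
      (hgam_int.intervalIntegrable (a := t₀) (b := t₀ + h))
      (hgam_int.intervalIntegrable (a := t₀ + h) (b := s))
    have hzero : (∫ r in (t₀ + h)..s, gam r) = 0 := by
      rw [intervalIntegral.integral_of_le hs]
      rw [setIntegral_congr_fun measurableSet_Ioc (g := fun _ => (0:ℝ))
        (fun r hr => by
          have hrI : r ∉ I := by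
            rw [hIdef]
            intro hmem
            rw [Set.mem_Icc] at hmem
            linarith [hr.1]
          rw [hgam_def]
          simp [htb_zero r hrI])]
      simp
    linarith
  have hRcont : Continuous fun τ : ℝ => ∫ s in t₀..τ, gam s := hgam_int.continuous_primitive t₀
  -- pieces relating gam to exp((q-1)A)·tb
  have hb3 : ∀ τ : ℝ, (∫ s in t₀..τ, gam s)
      = -(q - 1) * ∫ s in t₀..τ, Real.exp ((q - 1) * ∫ u in t₀..s, ta u) * tb s := by
    intro τ
    rw [← intervalIntegral.integral_const_mul]
    apply intervalIntegral.integral_congr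
    intro s _
    rw [hgam_def]
    ring
  have hPtb_int : Integrable fun s => Real.exp ((q - 1) * ∫ u in t₀..s, ta u) * tb s := by
    refine bddcont_mul_integrable htb_int
      (Real.continuous_exp.comp (continuous_const.mul hAc))
      (C := Real.exp ((q - 1) * ∫ x, |ta x|)) (fun s => ?_)
    have h1 : |Real.exp ((q - 1) * ∫ u in t₀..s, ta u)|
        = Real.exp ((q - 1) * ∫ u in t₀..s, ta u) := abs_of_pos (Real.exp_pos _)
    rw [h1]
    exact Real.exp_le_exp.mpr (mul_le_mul_of_nonneg_left (abs_le.mp (hAbd s)).2 hp.le)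
  -- positivity of the bracket at the endpoint, from the smallness assumption
  have hsmall' : c ^ (q - 1) * (q - 1) * (∫ s in t₀..(t₀ + h), tb s)
      < Real.exp (-(q - 1) * ∫ s in t₀..(t₀ + h), ta s) := by
    have e1 : (∫ s in t₀..(t₀ + h), a s) = ∫ s in t₀..(t₀ + h), ta s :=
      intervalIntegral.integral_congr (fun s hs => hta_eq s (by
        rw [Set.uIcc_of_le hT] at hs
        rw [hIdef]; exact hs))
    have e2 : (∫ s in t₀..(t₀ + h), b s) = ∫ s in t₀..(t₀ + h), tb s :=
      intervalIntegral.integral_congr (fun s hs => htb_eq s (by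
        rw [Set.uIcc_of_le hT] at hs
        rw [hIdef]; exact hs))
    rw [← e1, ← e2, show -(q - 1) = (1 - q) by ring]
    exact hsmall
  have hPbound : (∫ s in t₀..(t₀ + h), Real.exp ((q - 1) * ∫ u in t₀..s, ta u) * tb s)
      ≤ Real.exp ((q - 1) * ∫ u in t₀..(t₀ + h), ta u) * ∫ s in t₀..(t₀ + h), tb s := by
    rw [← intervalIntegral.integral_const_mul]
    refine intervalIntegral.integral_mono_on hT hPtb_int.intervalIntegrable
      ((htb_int.const_mul _).intervalIntegrable) (fun s hs => ?_)
    exact mul_le_mul_of_nonneg_right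
      (Real.exp_le_exp.mpr (mul_le_mul_of_nonneg_left (hAmono s (t₀ + h) hs.2) hp.le))
      (htb_nonneg s)
  have hPtb_nonneg : 0 ≤ ∫ s in t₀..(t₀ + h), Real.exp ((q - 1) * ∫ u in t₀..s, ta u) * tb s :=
    intervalIntegral.integral_nonneg hT fun s _ =>
      mul_nonneg (Real.exp_pos _).le (htb_nonneg s)
  have hκ₀pos : 0 < c ^ (-(q - 1)) + ∫ s in t₀..(t₀ + h), gam s := by
    have hcp : (0:ℝ) < c ^ (q - 1) := Real.rpow_pos_of_pos hc _
    have hW : (0:ℝ) < Real.exp ((q - 1) * ∫ u in t₀..(t₀ + h), ta u) := Real.exp_pos _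
    have hWW : Real.exp (-(q - 1) * ∫ s in t₀..(t₀ + h), ta s)
        * Real.exp ((q - 1) * ∫ u in t₀..(t₀ + h), ta u) = 1 := by
      rw [← Real.exp_add,
        show -(q - 1) * (∫ s in t₀..(t₀ + h), ta s)
          + (q - 1) * (∫ u in t₀..(t₀ + h), ta u) = 0 by ring]
      exact Real.exp_zero
    have hstep := mul_lt_mul_of_pos_right hsmall' hW
    rw [hWW] at hstep
    have htbnn : 0 ≤ ∫ s in t₀..(t₀ + h), tb s :=
      intervalIntegral.integral_nonneg hT fun s _ => htb_nonneg s
    have hinv : (q - 1) * Real.exp ((q - 1) * ∫ u in t₀..(t₀ + h), ta u)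
        * (∫ s in t₀..(t₀ + h), tb s) < (c ^ (q - 1))⁻¹ := by
      rw [inv_eq_one_div, lt_div_iff₀ hcp]
      calc (q - 1) * Real.exp ((q - 1) * ∫ u in t₀..(t₀ + h), ta u)
            * (∫ s in t₀..(t₀ + h), tb s) * c ^ (q - 1)
          = c ^ (q - 1) * (q - 1) * (∫ s in t₀..(t₀ + h), tb s)
            * Real.exp ((q - 1) * ∫ u in t₀..(t₀ + h), ta u) := by ring
        _ < 1 := hstep
    rw [hb3 (t₀ + h), Real.rpow_neg hc.le]
    have h5 : (q - 1) * (∫ s in t₀..(t₀ + h), Real.exp ((q - 1) * ∫ u in t₀..s, ta u) * tb s)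
        ≤ (q - 1) * (Real.exp ((q - 1) * ∫ u in t₀..(t₀ + h), ta u)
          * ∫ s in t₀..(t₀ + h), tb s) := mul_le_mul_of_nonneg_left hPbound hp.le
    nlinarith [hinv, h5]
  -- THE KEY IDENTITY: the explicit function solves the integral equation
  have key : ∀ x : ℝ, 0 < x + (∫ s in t₀..(t₀ + h), gam s) → ∀ t' ∈ I,
      Real.exp (∫ u in t₀..t', ta u) * (x + ∫ s in t₀..t', gam s) ^ (-(1/(q-1)))
        = x ^ (-(1/(q-1))) + ∫ s in t₀..t',
            ((Real.exp (∫ u in t₀..s, ta u)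
                * (x + ∫ r in t₀..s, gam r) ^ (-(1/(q-1)))) * ta s
              + (Real.exp (∫ u in t₀..s, ta u)
                * (x + ∫ r in t₀..s, gam r) ^ (-(1/(q-1)))) ^ q * tb s) := by
    intro x hx t' ht'
    have hxpos : 0 < x := by
      have := hRT_nonpos
      linarith
    have hlo : ∀ s ∈ I, x + (∫ s' in t₀..(t₀ + h), gam s') ≤ x + ∫ r in t₀..s, gam r := by
      intro s hs
      rw [hIdef] at hs
      have := hRmono s (t₀ + h) hs.2
      linarith
    have hhi : ∀ s ∈ I, x + (∫ r in t₀..s, gam r) ≤ x := by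
      intro s hs
      rw [hIdef] at hs
      have := hRmono t₀ s hs.1
      linarith [hR0]
    have hXpos : ∀ s ∈ I, 0 < x + ∫ r in t₀..s, gam r :=
      fun s hs => lt_of_lt_of_le hx (hlo s hs)
    have hXlbG : ∀ s : ℝ, x + (∫ s' in t₀..(t₀ + h), gam s') ≤ x + ∫ r in t₀..s, gam r := by
      intro s
      rcases le_total s t₀ with hs | hs
      · have h1 := hRmono s t₀ hs
        have h2 := hRT_nonpos
        linarith [hR0]
      · rcases le_total s (t₀ + h) with hs2 | hs2
        · exact hlo s (by rw [hIdef]; exact ⟨hs, hs2⟩)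
        · rw [hRconst s hs2]
    have hXposG : ∀ s : ℝ, 0 < x + ∫ r in t₀..s, gam r :=
      fun s => lt_of_lt_of_le hx (hXlbG s)
    -- chain rule for the rpow factor
    set gamD : ℝ → ℝ := fun s => (Real.exp ((q - 1) * ∫ u in t₀..s, ta u)
      * (x + ∫ r in t₀..s, gam r) ^ (-(1/(q-1)) - 1)) * tb s with hgamD_def
    have hgamD_int : Integrable gamD := by
      rw [hgamD_def]
      have hXc : Continuous fun s : ℝ => x + ∫ r in t₀..s, gam r :=
        continuous_const.add hRcont
      have hXEc : Continuous fun s : ℝ => (x + ∫ r in t₀..s, gam r) ^ (-(1/(q-1)) - 1) := by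
        rw [continuous_iff_continuousAt]
        intro s
        exact hXc.continuousAt.rpow_const (Or.inl (ne_of_gt (hXposG s)))
      refine bddcont_mul_integrable htb_int
        ((Real.continuous_exp.comp (continuous_const.mul hAc)).mul hXEc)
        (C := Real.exp ((q - 1) * ∫ x', |ta x'|)
          * (x + ∫ s' in t₀..(t₀ + h), gam s') ^ (-(1/(q-1)) - 1)) (fun s => ?_)
      have h1 : |Real.exp ((q - 1) * ∫ u in t₀..s, ta u)
          * (x + ∫ r in t₀..s, gam r) ^ (-(1/(q-1)) - 1)|
          = Real.exp ((q - 1) * ∫ u in t₀..s, ta u)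
            * (x + ∫ r in t₀..s, gam r) ^ (-(1/(q-1)) - 1) := by
        rw [abs_of_nonneg (mul_nonneg (Real.exp_pos _).le (Real.rpow_nonneg (hXposG s).le _))]
      rw [h1]
      have h2 : (x + ∫ r in t₀..s, gam r) ^ (-(1/(q-1)) - 1)
          ≤ (x + ∫ s' in t₀..(t₀ + h), gam s') ^ (-(1/(q-1)) - 1) := by
        refine Real.rpow_le_rpow_of_nonpos hx (hXlbG s) ?_
        have h3 : 0 < 1 / (q - 1) := by positivity
        linarith
      have h4 : Real.exp ((q - 1) * ∫ u in t₀..s, ta u)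
          ≤ Real.exp ((q - 1) * ∫ x', |ta x'|) :=
        Real.exp_le_exp.mpr (mul_le_mul_of_nonneg_left (abs_le.mp (hAbd s)).2 hp.le)
      have h5 : 0 ≤ (x + ∫ r in t₀..s, gam r) ^ (-(1/(q-1)) - 1) :=
        Real.rpow_nonneg (hXposG s).le _
      nlinarith [Real.exp_pos ((q - 1) * ∫ u in t₀..s, ta u)]
    have hD : ∀ t'' ∈ I, (x + ∫ s in t₀..t'', gam s) ^ (-(1/(q-1)))
        = x ^ (-(1/(q-1))) + ∫ s in t₀..t'', gamD s := by
      intro t'' ht''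
      have hκ2 : (0:ℝ) < (x + ∫ s' in t₀..(t₀ + h), gam s') / 2 := by positivity
      have hch := integral_chain_rule t₀ (t₀ + h) x
        (x + ∫ s' in t₀..(t₀ + h), gam s') x
        ((x + ∫ s' in t₀..(t₀ + h), gam s') / 2) hκ2 gam hgam_int
        (fun s hs => ⟨hlo s (by rw [hIdef]; exact hs), hhi s (by rw [hIdef]; exact hs)⟩)
        (fun y => y ^ (-(1/(q-1)))) (fun y => (-(1/(q-1))) * y ^ (-(1/(q-1)) - 1))
        (fun y hy => Real.hasDerivAt_rpow_const (Or.inl (by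
          have := hy.1
          intro h0
          rw [h0] at this
          linarith)))
        (by
          apply ContinuousOn.mul continuousOn_const
          intro y hy
          refine (Real.continuousAt_rpow_const y _ (Or.inl ?_)).continuousWithinAt
          have := hy.1
          intro h0
          rw [h0] at this
          linarith) ht''
      beta_reduce at hch
      rw [hch]
      congr 1
      apply intervalIntegral.integral_congr
      intro s _
      beta_reduce
      have hgam_apply : gam s = (-(q - 1) * Real.exp ((q - 1) * ∫ u in t₀..s, ta u)) * tb s :=
        rfl
      have hgamD_apply : gamD s = (Real.exp ((q - 1) * ∫ u in t₀..s, ta u)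
          * (x + ∫ r in t₀..s, gam r) ^ (-(1/(q-1)) - 1)) * tb s := rfl
      rw [hgam_apply, hgamD_apply]
      have hiden : (-(1/(q-1))) * (-(q-1)) = 1 := by field_simp
      linear_combination ((x + ∫ r in t₀..s, gam r) ^ (-(1/(q-1)) - 1)
        * Real.exp ((q - 1) * ∫ u in t₀..s, ta u) * tb s) * hiden
    have hprod := integral_product_rule t₀ (t₀ + h) 1 (x ^ (-(1/(q-1)))) phiE gamD
      hphiE_int hgamD_int ht'
    rw [← hE t' ht', ← hD t' ht'] at hprod
    rw [hprod, one_mul]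
    congr 1
    apply intervalIntegral.integral_congr
    intro s hs
    have hsI : s ∈ I := by
      rw [hIdef]
      rw [hIdef] at ht'
      have huIcc : Set.uIcc t₀ t' = Set.Icc t₀ t' := Set.uIcc_of_le ht'.1
      rw [huIcc] at hs
      exact ⟨hs.1, le_trans hs.2 ht'.2⟩
    beta_reduce
    rw [← hD s hsI, ← hE s hsI]
    rw [hphiE_def, hgamD_def]
    simp only
    rw [← exp_rpow_helper hq (hXpos s hsI) (∫ u in t₀..s, ta u)]
    ring
  -- COMPARISON: any solution of the integral inequality stays below the explicit function
  have comp : ∀ x : ℝ, 0 < x + (∫ s in t₀..(t₀ + h), gam s) → c < x ^ (-(1/(q-1))) →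
      ∀ t' ∈ I, f t' ≤ Real.exp (∫ u in t₀..t', ta u)
        * (x + ∫ s in t₀..t', gam s) ^ (-(1/(q-1))) := by
    intro x hx hcx
    have hXpos : ∀ s ∈ I, 0 < x + ∫ r in t₀..s, gam r := by
      intro s hs
      rw [hIdef] at hs
      have := hRmono s (t₀ + h) hs.2
      linarith
    have hu_contOn : ContinuousOn
        (fun τ => Real.exp (∫ u in t₀..τ, ta u)
          * (x + ∫ s in t₀..τ, gam s) ^ (-(1/(q-1)))) I := by
      apply ContinuousOn.mul (Real.continuous_exp.comp hAc).continuousOn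
      intro τ hτ
      exact ((continuous_const.add hRcont).continuousWithinAt).rpow_const
        (Or.inl (ne_of_gt (hXpos τ hτ)))
    by_contra hcon
    push_neg at hcon
    obtain ⟨t1, ht1, hlt1⟩ := hcon
    set S : Set ℝ := I ∩ (fun τ => f τ
      - Real.exp (∫ u in t₀..τ, ta u) * (x + ∫ s in t₀..τ, gam s) ^ (-(1/(q-1)))) ⁻¹'
        Set.Ici 0 with hSdef
    have hSclosed : IsClosed S := by
      rw [hSdef]
      refine ContinuousOn.preimage_isClosed_of_isClosed
        (hf_cont.sub hu_contOn) ?_ isClosed_Ici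
      rw [hIdef]
      exact isClosed_Icc
    have hSmem : ∀ τ, τ ∈ S ↔ τ ∈ I ∧ 0 ≤ f τ
        - Real.exp (∫ u in t₀..τ, ta u) * (x + ∫ s in t₀..τ, gam s) ^ (-(1/(q-1))) := by
      intro τ
      rw [hSdef]
      simp [Set.mem_inter_iff]
    have hSne : S.Nonempty := ⟨t1, (hSmem t1).mpr ⟨ht1, by linarith⟩⟩
    have hSbdd : BddBelow S := ⟨t₀, fun τ hτ => by
      have := ((hSmem τ).mp hτ).1
      rw [hIdef] at this
      exact this.1⟩
    set tstar := sInf S with htstar_def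
    have htstarS : tstar ∈ S := hSclosed.csInf_mem hSne hSbdd
    have htstarI : tstar ∈ I := ((hSmem tstar).mp htstarS).1
    have htstarIcc : tstar ∈ Set.Icc t₀ (t₀ + h) := by rw [hIdef] at htstarI; exact htstarI
    have htstar_ge : 0 ≤ f tstar - Real.exp (∫ u in t₀..tstar, ta u)
        * (x + ∫ s in t₀..tstar, gam s) ^ (-(1/(q-1))) := ((hSmem tstar).mp htstarS).2
    have hft₀ : f t₀ ≤ c := by
      have := hineq t₀ (by rw [hIdef]; exact ⟨le_refl _, hT⟩)
      simpa using this
    have hut₀ : Real.exp (∫ u in t₀..t₀, ta u)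
        * (x + ∫ s in t₀..t₀, gam s) ^ (-(1/(q-1))) = x ^ (-(1/(q-1))) := by
      rw [intervalIntegral.integral_same, hR0, Real.exp_zero, add_zero, one_mul]
    have ht₀notS : t₀ ∉ S := by
      intro hmem
      have h1 := ((hSmem t₀).mp hmem).2
      rw [hut₀] at h1
      linarith
    have ht₀star : t₀ < tstar := by
      rcases lt_or_eq_of_le htstarIcc.1 with h1 | h1
      · exact h1
      · exact absurd (h1 ▸ htstarS) ht₀notS
    have hprev : ∀ s ∈ Set.Ico t₀ tstar, f s < Real.exp (∫ u in t₀..s, ta u)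
        * (x + ∫ r in t₀..s, gam r) ^ (-(1/(q-1))) := by
      intro s hs
      have hsI : s ∈ I := by
        rw [hIdef]
        exact ⟨hs.1, le_trans hs.2.le htstarIcc.2⟩
      have hnotS : s ∉ S := notMem_of_lt_csInf hs.2 hSbdd
      by_contra hge
      push_neg at hge
      exact hnotS ((hSmem s).mpr ⟨hsI, by linarith⟩)
    -- the integral comparison
    have hIccsub : Set.Icc t₀ tstar ⊆ I := by
      rw [hIdef]
      exact Set.Icc_subset_Icc le_rfl htstarIcc.2
    have hfc' : ContinuousOn f (Set.Icc t₀ tstar) := hf_cont.mono hIccsub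
    have hfqc : ContinuousOn (fun s => f s ^ q) (Set.Icc t₀ tstar) := fun s hs =>
      (hfc' s hs).rpow_const (Or.inr (by linarith))
    have huc' : ContinuousOn (fun τ => Real.exp (∫ u in t₀..τ, ta u)
        * (x + ∫ s in t₀..τ, gam s) ^ (-(1/(q-1)))) (Set.Icc t₀ tstar) :=
      hu_contOn.mono hIccsub
    have huqc : ContinuousOn (fun τ => (Real.exp (∫ u in t₀..τ, ta u)
        * (x + ∫ s in t₀..τ, gam s) ^ (-(1/(q-1)))) ^ q) (Set.Icc t₀ tstar) := fun s hs =>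
      (huc' s hs).rpow_const (Or.inr (by linarith))
    have hIf_int : IntervalIntegrable (fun s => f s * ta s + f s ^ q * tb s)
        volume t₀ tstar := by
      rw [intervalIntegrable_iff_integrableOn_Icc_of_le ht₀star.le]
      exact (contOn_mul_integrableOn hta_int hfc').add (contOn_mul_integrableOn htb_int hfqc)
    have hIu_int : IntervalIntegrable (fun s =>
        (Real.exp (∫ u in t₀..s, ta u) * (x + ∫ r in t₀..s, gam r) ^ (-(1/(q-1)))) * ta s
          + (Real.exp (∫ u in t₀..s, ta u)
            * (x + ∫ r in t₀..s, gam r) ^ (-(1/(q-1)))) ^ q * tb s) volume t₀ tstar := by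
      rw [intervalIntegrable_iff_integrableOn_Icc_of_le ht₀star.le]
      exact (contOn_mul_integrableOn hta_int huc').add (contOn_mul_integrableOn htb_int huqc)
    have hae : (fun s => f s * ta s + f s ^ q * tb s)
        ≤ᵐ[volume.restrict (Set.Icc t₀ tstar)] (fun s =>
          (Real.exp (∫ u in t₀..s, ta u) * (x + ∫ r in t₀..s, gam r) ^ (-(1/(q-1)))) * ta s
            + (Real.exp (∫ u in t₀..s, ta u)
              * (x + ∫ r in t₀..s, gam r) ^ (-(1/(q-1)))) ^ q * tb s) := by
      refine (ae_restrict_iff' measurableSet_Icc).mpr ?_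
      have hne : ∀ᵐ s : ℝ, s ≠ tstar := by
        rw [ae_iff]
        have hset : {s : ℝ | ¬s ≠ tstar} = {tstar} := by
          ext y
          simp
        rw [hset]
        exact Real.volume_singleton
      filter_upwards [hne] with s hsne hsmem
      have hsIco : s ∈ Set.Ico t₀ tstar := ⟨hsmem.1, lt_of_le_of_ne hsmem.2 hsne⟩
      have hsI : s ∈ I := by
        rw [hIdef]
        exact ⟨hsIco.1, le_trans hsIco.2.le htstarIcc.2⟩
      have hflt := hprev s hsIco
      have hf0 := hf_nonneg s hsI
      exact add_le_add (mul_le_mul_of_nonneg_right hflt.le (hta_nonneg s))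
        (mul_le_mul_of_nonneg_right (Real.rpow_le_rpow hf0 hflt.le (by linarith))
          (htb_nonneg s))
    have hmono := intervalIntegral.integral_mono_ae_restrict ht₀star.le hIf_int hIu_int hae
    have h6 := hineq tstar htstarIcc
    have h1 : (∫ s in t₀..tstar, (a s * f s + b s * f s ^ q))
        = ∫ s in t₀..tstar, (f s * ta s + f s ^ q * tb s) := by
      apply intervalIntegral.integral_congr
      intro s hs
      have hsI : s ∈ I := hIccsub (by rwa [Set.uIcc_of_le ht₀star.le] at hs)
      beta_reduce
      rw [← hta_eq s hsI, ← htb_eq s hsI]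
      ring
    rw [h1] at h6
    have h8 : Real.exp (∫ u in t₀..tstar, ta u)
        * (x + ∫ s in t₀..tstar, gam s) ^ (-(1/(q-1)))
        = x ^ (-(1/(q-1))) + ∫ s in t₀..tstar,
            ((Real.exp (∫ u in t₀..s, ta u)
                * (x + ∫ r in t₀..s, gam r) ^ (-(1/(q-1)))) * ta s
              + (Real.exp (∫ u in t₀..s, ta u)
                * (x + ∫ r in t₀..s, gam r) ^ (-(1/(q-1)))) ^ q * tb s) :=
      key x hx tstar htstarI
    linarith
  -- choose ε₀
  have hcontF : ContinuousAt (fun y : ℝ => y ^ (-(q - 1))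
      + ∫ s in t₀..(t₀ + h), gam s) c :=
    (Real.continuousAt_rpow_const c (-(q - 1)) (Or.inl hc.ne')).add continuousAt_const
  have hmem : (fun y : ℝ => y ^ (-(q - 1)) + ∫ s in t₀..(t₀ + h), gam s) ⁻¹' Set.Ioi 0
      ∈ nhds c := hcontF (Ioi_mem_nhds hκ₀pos)
  rw [Metric.mem_nhds_iff] at hmem
  obtain ⟨δ₀, hδ₀, hball⟩ := hmem
  have hε₀pos : 0 < δ₀ / 2 := by positivity
  have hε₀prop : 0 < (c + δ₀ / 2) ^ (-(q - 1)) + ∫ s in t₀..(t₀ + h), gam s := by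
    have hmem2 : c + δ₀ / 2 ∈ Metric.ball c δ₀ := by
      rw [Metric.mem_ball, Real.dist_eq, show c + δ₀ / 2 - c = δ₀ / 2 by ring,
        abs_of_pos hε₀pos]
      linarith
    exact hball hmem2
  -- final assembly
  intro t ht
  have htIcc : t ∈ Set.Icc t₀ (t₀ + h) := by rw [hIdef] at ht; exact ht
  have hb1 : (∫ s in t₀..t, a s) = ∫ s in t₀..t, ta s := by
    apply intervalIntegral.integral_congr
    intro s hs
    rw [Set.uIcc_of_le htIcc.1] at hs
    exact hta_eq s (by rw [hIdef]; exact ⟨hs.1, le_trans hs.2 htIcc.2⟩)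
  have hb2 : (∫ s in t₀..t, b s * Real.exp (-(q - 1) * ∫ r in s..t, a r))
      = Real.exp (-(q - 1) * ∫ u in t₀..t, ta u)
        * ∫ s in t₀..t, Real.exp ((q - 1) * ∫ u in t₀..s, ta u) * tb s := by
    rw [← intervalIntegral.integral_const_mul]
    apply intervalIntegral.integral_congr
    intro s hs
    rw [Set.uIcc_of_le htIcc.1] at hs
    have hsI : s ∈ I := by rw [hIdef]; exact ⟨hs.1, le_trans hs.2 htIcc.2⟩
    have hadd : (∫ u in t₀..s, ta u) + ∫ u in s..t, ta u = ∫ u in t₀..t, ta u :=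
      intervalIntegral.integral_add_adjacent_intervals
        (hta_int.intervalIntegrable (a := t₀) (b := s))
        (hta_int.intervalIntegrable (a := s) (b := t))
    have hst : (∫ r in s..t, a r) = ∫ r in s..t, ta r := by
      apply intervalIntegral.integral_congr
      intro r hr
      rw [Set.uIcc_of_le hs.2] at hr
      exact hta_eq r (by rw [hIdef]; exact ⟨le_trans hs.1 hr.1, le_trans hr.2 htIcc.2⟩)
    beta_reduce
    rw [hst, ← htb_eq s hsI]
    rw [show -(q - 1) * (∫ u in t₀..t, ta u)
        = -(q - 1) * (∫ r in s..t, ta r) + (-(q - 1)) * ∫ u in t₀..s, ta u by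
      rw [← hadd]; ring]
    rw [Real.exp_add]
    rw [show (-(q - 1)) * (∫ u in t₀..s, ta u)
        = -((q - 1) * ∫ u in t₀..s, ta u) by ring, Real.exp_neg]
    rw [show -(q - 1) * (∫ r in s..t, ta r) = (1 - q) * ∫ r in s..t, ta r by ring]
    field_simp [Real.exp_ne_zero]
  have hXtpos : 0 < c ^ (-(q - 1)) + ∫ s in t₀..t, gam s := by
    have := hRmono t (t₀ + h) htIcc.2
    linarith
  -- limit argument : f t ≤ exp(A t) * (c^(-(q-1)) + R t)^(-(1/(q-1)))
  have hlimit : f t ≤ Real.exp (∫ u in t₀..t, ta u)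
      * (c ^ (-(q - 1)) + ∫ s in t₀..t, gam s) ^ (-(1/(q-1))) := by
    have htend : Filter.Tendsto (fun ε : ℝ => Real.exp (∫ u in t₀..t, ta u)
        * ((c + ε) ^ (-(q - 1)) + ∫ s in t₀..t, gam s) ^ (-(1/(q-1))))
        (nhdsWithin 0 (Set.Ioi 0))
        (nhds (Real.exp (∫ u in t₀..t, ta u)
          * (c ^ (-(q - 1)) + ∫ s in t₀..t, gam s) ^ (-(1/(q-1))))) := by
      have h1 : ContinuousAt (fun ε : ℝ => (c + ε) ^ (-(q - 1)) + ∫ s in t₀..t, gam s) 0 := by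
        refine ContinuousAt.add ?_ continuousAt_const
        refine ContinuousAt.rpow_const (continuousAt_const.add continuousAt_id) (Or.inl ?_)
        norm_num
        exact hc.ne'
      have hca : ContinuousAt (fun ε : ℝ => Real.exp (∫ u in t₀..t, ta u)
          * ((c + ε) ^ (-(q - 1)) + ∫ s in t₀..t, gam s) ^ (-(1/(q-1)))) 0 := by
        refine ContinuousAt.mul continuousAt_const (h1.rpow_const (Or.inl ?_))
        have hpos0 : (0:ℝ) < (c + 0) ^ (-(q - 1)) + ∫ s in t₀..t, gam s := by
          rw [add_zero]
          exact hXtpos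
        exact ne_of_gt hpos0
      have := hca.tendsto.mono_left
        (nhdsWithin_le_nhds : nhdsWithin (0:ℝ) (Set.Ioi 0) ≤ nhds 0)
      simpa using this
    have hev : ∀ᶠ ε in nhdsWithin (0:ℝ) (Set.Ioi 0),
        f t ≤ Real.exp (∫ u in t₀..t, ta u)
          * ((c + ε) ^ (-(q - 1)) + ∫ s in t₀..t, gam s) ^ (-(1/(q-1))) := by
      filter_upwards [Ioc_mem_nhdsGT_of_mem
        (⟨le_refl (0:ℝ), hε₀pos⟩ : (0:ℝ) ∈ Set.Ico 0 (δ₀ / 2))] with ε hε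
      have hcε : (0:ℝ) < c + ε := by
        have := hε.1
        linarith
      have hx : 0 < (c + ε) ^ (-(q - 1)) + ∫ s in t₀..(t₀ + h), gam s := by
        have hmono2 : (c + δ₀ / 2) ^ (-(q - 1)) ≤ (c + ε) ^ (-(q - 1)) :=
          Real.rpow_le_rpow_of_nonpos hcε (by linarith [hε.2]) (by linarith)
        linarith [hε₀prop]
      have hcx : c < ((c + ε) ^ (-(q - 1))) ^ (-(1/(q-1))) := by
        have heq : ((c + ε) ^ (-(q - 1))) ^ (-(1/(q-1))) = c + ε := by
          rw [← Real.rpow_mul hcε.le,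
            show (-(q - 1)) * (-(1/(q-1))) = 1 by field_simp, Real.rpow_one]
        rw [heq]
        linarith [hε.1]
      exact comp ((c + ε) ^ (-(q - 1))) hx hcx t ht
    exact ge_of_tendsto htend hev
  -- rewrite the goal into the internal normal form
  rw [show (1:ℝ) - q = -(q - 1) by ring, hb1, hb2]
  have hfact : c ^ (-(q - 1)) * Real.exp (-(q - 1) * ∫ s in t₀..t, ta s)
      - (q - 1) * (Real.exp (-(q - 1) * ∫ u in t₀..t, ta u)
        * ∫ s in t₀..t, Real.exp ((q - 1) * ∫ u in t₀..s, ta u) * tb s)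
      = Real.exp (-(q - 1) * ∫ u in t₀..t, ta u)
        * (c ^ (-(q - 1)) + ∫ s in t₀..t, gam s) := by
    rw [hb3 t]
    ring
  rw [hfact]
  constructor
  · exact mul_pos (Real.exp_pos _) hXtpos
  · rw [Real.mul_rpow (Real.exp_pos _).le hXtpos.le, ← Real.exp_mul,
      show -(q - 1) * (∫ u in t₀..t, ta u) * (-(1 / (q - 1))) = ∫ u in t₀..t, ta u by
        field_simp]
    exact hlimit
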